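/- Let G be a graph containing two disjoint cliques A = {a_1,…,a_m} and B = {b_1,…,b_m} such that for each i, every neighbour of a_i outside A is also a neighbour of b_i outside B (i.e., N(a_i)∖A ⊆ N(b_i)∖B). Then for every k, G is not k-vertex-critical. -/

import Mathlib

open SimpleGraph

/-- A graph is `k`-vertex-critical if its chromatic number is `k` and deleting
any vertex lowers the chromatic number. -/
def IsKVertexCritical {V : Type*} (G : SimpleGraph V) (k : ℕ) : Prop :=
  G.chromaticNumber = (k : ℕ∞) ∧
    ∀ v : V, (G.induce {u | u ≠ v}).chromaticNumber < (k : ℕ∞)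

/-- The clique number of a graph. -/
noncomputable def cliqueNum' {V : Type*} (G : SimpleGraph V) : ℕ :=
  sSup {n | ∃ s : Finset V, G.IsNClique n s}

/-- `G` has no induced subgraph isomorphic to `H`. -/
def IndFree {W V : Type*} (H : SimpleGraph W) (G : SimpleGraph V) : Prop :=
  ¬ ∃ s : Set V, Nonempty (H ≃g G.induce s)

def CompleteTo {V : Type*} (G : SimpleGraph V) (S T : Set V) : Prop :=
  ∀ s ∈ S, ∀ t ∈ T, G.Adj s t

def AnticompleteTo {V : Type*} (G : SimpleGraph V) (S T : Set V) : Prop :=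
  ∀ s ∈ S, ∀ t ∈ T, ¬ G.Adj s t

/-- `M` is a module of `G`: each outside vertex is complete or anticomplete to `M`. -/
def IsModule {V : Type*} (G : SimpleGraph V) (M : Set V) : Prop :=
  ∀ v ∉ M, (∀ m ∈ M, G.Adj v m) ∨ (∀ m ∈ M, ¬ G.Adj v m)

/-- A non-trivial module: a module `M` with `2 ≤ |M| < |V(G)|`. -/
def IsNontrivialModule {V : Type*} (G : SimpleGraph V) (M : Set V) : Prop :=
  IsModule G M ∧ 2 ≤ M.ncard ∧ M.ncard < Nat.card V

/-- `G` is an expansion of `H` with parts `Q w`: parts are nonempty, partition `V(G)`,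
are completely joined along edges of `H` and anticomplete along non-edges. -/
def IsExpansion {V W : Type*} (G : SimpleGraph V) (H : SimpleGraph W) (Q : W → Set V) : Prop :=
  (∀ w, (Q w).Nonempty) ∧
  (Pairwise fun w w' => Disjoint (Q w) (Q w')) ∧
  (∀ v, ∃ w, v ∈ Q w) ∧
  (∀ w w', H.Adj w w' → CompleteTo G (Q w) (Q w')) ∧
  (∀ w w', w ≠ w' → ¬ H.Adj w w' → AnticompleteTo G (Q w) (Q w'))

/-- The path on four vertices. -/
def P4 : SimpleGraph (Fin 4) := SimpleGraph.pathGraph 4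

/-- The path on five vertices. -/
def P5 : SimpleGraph (Fin 5) := SimpleGraph.pathGraph 5

/-- The gem: a `P₄` (0-1-2-3) plus a dominating vertex 4. -/
def gem : SimpleGraph (Fin 5) :=
  SimpleGraph.fromRel (fun a b =>
    (a, b) ∈ [((0 : Fin 5), (1 : Fin 5)), (1, 2), (2, 3), (4, 0), (4, 1), (4, 2), (4, 3)])

/-- The five-cycle. -/
def cycle5 : SimpleGraph (Fin 5) :=
  SimpleGraph.fromRel (fun a b =>
    (a, b) ∈ [((0 : Fin 5), (1 : Fin 5)), (1, 2), (2, 3), (3, 4), (4, 0)])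

/-- Lemma 3.1 of Hoàng et al.: if `G` has two disjoint cliques
`A = {a 1, …, a m}` and `B = {b 1, …, b m}` with `N(a i) \ A ⊆ N(b i) \ B` for all `i`,
then `G` is not `k`-vertex-critical for any `k`. -/
theorem not_critical_of_similar_cliques {V : Type*} (G : SimpleGraph V) (m : ℕ) (hm : 0 < m)
    (a b : Fin m → V) (ha : Function.Injective a) (hb : Function.Injective b)
    (hdisj : Disjoint (Set.range a) (Set.range b))
    (hA : G.IsClique (Set.range a)) (hB : G.IsClique (Set.range b))
    (hsub : ∀ i : Fin m, ∀ v : V, G.Adj (a i) v → v ∉ Set.range a →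
      G.Adj (b i) v ∧ v ∉ Set.range b) :
    ∀ k : ℕ, ¬ IsKVertexCritical G k := by
  classical
  intro k hcrit
  obtain ⟨hchrom, hdel⟩ := hcrit
  set i0 : Fin m := ⟨0, hm⟩
  have hlt := hdel (a i0)
  -- k ≥ 1
  rcases Nat.eq_zero_or_pos k with rfl | hk
  · exact absurd hlt (by simp)
  -- χ(G − a i0) ≤ k - 1
  have hle : ((G.induce {u | u ≠ a i0}).chromaticNumber) ≤ ((k-1 : ℕ) : ℕ∞) := by
    have hcast : ((k : ℕ∞)) = ((k-1 : ℕ) : ℕ∞) + 1 := by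
      norm_cast
      omega
    rw [hcast] at hlt
    exact (ENat.lt_add_one_iff (by simp)).mp hlt
  have hcol : (G.induce {u | u ≠ a i0}).Colorable (k-1) :=
    SimpleGraph.chromaticNumber_le_iff_colorable.mp hle
  obtain ⟨C⟩ := hcol
  -- b i ≠ a i0 for all i
  have hbne : ∀ i : Fin m, b i ∈ {u | u ≠ a i0} := by
    intro i
    intro h
    exact Set.disjoint_left.mp hdisj ⟨i0, h.symm⟩ ⟨i, rfl⟩
  -- define new coloring of G
  have hcolG : G.Colorable (k-1) := by
    refine ⟨SimpleGraph.Coloring.mk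
      (fun v => if h : v ∈ Set.range a then C ⟨b h.choose, hbne _⟩
        else C ⟨v, fun hv => h ⟨i0, hv.symm⟩⟩) ?_⟩
    intro u v huv
    split_ifs with hu hv hv
    · -- both in A
      intro hC
      have hiu : a hu.choose = u := hu.choose_spec
      have hiv : a hv.choose = v := hv.choose_spec
      have hne : hu.choose ≠ hv.choose := fun h => huv.ne (by rw [← hiu, ← hiv, h])
      have hadj : G.Adj (b hu.choose) (b hv.choose) :=
        hB ⟨_, rfl⟩ ⟨_, rfl⟩ (fun h => hne (hb h))
      exact C.valid (by exact hadj) hC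
    · -- u in A, v not
      have hiu : a hu.choose = u := hu.choose_spec
      have hadj : G.Adj (b hu.choose) v := (hsub hu.choose v (by rw [hiu]; exact huv) hv).1
      exact fun hC => C.valid (by exact hadj) hC
    · -- v in A, u not
      have hiv : a hv.choose = v := hv.choose_spec
      have hadj : G.Adj (b hv.choose) u := (hsub hv.choose u (by rw [hiv]; exact huv.symm) hu).1
      exact fun hC => C.valid (by exact hadj.symm) hC
    · exact fun hC => C.valid (by exact huv) hC
  have := hcolG.chromaticNumber_le
  rw [hchrom] at this
  have hklt : ((k-1:ℕ) : ℕ∞) < (k : ℕ∞) := by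
    exact_mod_cast Nat.sub_lt hk one_pos
  exact absurd (lt_of_le_of_lt this hklt) (lt_irrefl _)
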